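/- With the notation of the context, assume ε = 0, q_z = 0 and q ≥ 1. Then for every i with r − r_z ≤ i ≤ p−1, the monomial x_i x_p^{q−1} x_n^{υ−1} does not belong to the Ratliff-Rush closure of inP; in particular there is no integer m ≥ 1 with x_i x_p^{q−1} x_n^{υ−1} · (x_i^2)^m ∈ (inP)^{m+1}. -/

import Mathlib

/-- The Ratliff-Rush closure set `⋃_{k ≥ 1} (I^{k+1} : I^k)`. -/
def rrSet {R : Type*} [CommRing R] (I : Ideal R) : Set R :=
  ⋃ k ∈ Set.Ici (1 : ℕ), ((I ^ (k + 1)).colon ((I ^ k : Ideal R) : Set R) : Set R)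

open Fin.NatCast in
/-- The variable `x_i` (for `1 ≤ i ≤ n`) of `K[x_1, …, x_n] = MvPolynomial (Fin n) K`. -/
noncomputable def xv (K : Type*) [Field K] (n : ℕ) [NeZero n] (i : ℕ) : MvPolynomial (Fin n) K :=
  MvPolynomial.X ((i - 1 : ℕ) : Fin n)

/-- The monomial generators of the initial ideal `inP`: `x_i x_p^q` for `r ≤ i ≤ p`;
`x_j x_p^{q−qz−ε} x_n^{v−w}` for `εp + r − rz ≤ j ≤ p`; `x_n^v`; and `x_i x_j` for
`1 ≤ i ≤ j ≤ p−1`. A monomial with a negative exponent is omitted. -/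
noncomputable def inPgens (K : Type*) [Field K] (n : ℕ) [NeZero n] (p q r v w rz ε : ℕ) (qz : ℤ) :
    Set (MvPolynomial (Fin n) K) :=
  {f | ∃ i : ℕ, r ≤ i ∧ i ≤ p ∧ f = xv K n i * xv K n p ^ q} ∪
  {f | ∃ j : ℕ, ε * p + r ≤ j + rz ∧ j ≤ p ∧ qz + ε ≤ (q : ℤ) ∧
    f = xv K n j * xv K n p ^ ((q : ℤ) - qz - ε).toNat * xv K n n ^ (v - w)} ∪
  {xv K n n ^ v} ∪
  {f | ∃ i j : ℕ, 1 ≤ i ∧ i ≤ j ∧ j ≤ p - 1 ∧ f = xv K n i * xv K n j}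

open MvPolynomial
open Fin.NatCast

def sumSet {σ : Type*} (E : Set (σ →₀ ℕ)) : ℕ → Set (σ →₀ ℕ)
  | 0 => {0}
  | k+1 => {e | ∃ g ∈ E, ∃ e' ∈ sumSet E k, e = g + e'}

lemma span_monomial_pow {K : Type*} [Field K] {σ : Type*} (E : Set (σ →₀ ℕ)) (k : ℕ) :
    (Ideal.span ((fun s => (MvPolynomial.monomial s (1:K))) '' E)) ^ k
      = Ideal.span ((fun s => (MvPolynomial.monomial s (1:K))) '' sumSet E k) := by
  induction k with
  | zero =>
      simp only [pow_zero, sumSet, Set.image_singleton]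
      rw [monomial_zero', C_1, Ideal.span_singleton_one, Ideal.one_eq_top]
  | succ k ih =>
      rw [pow_succ, ih, Ideal.span_mul_span']
      congr 1
      ext f
      constructor
      · rintro ⟨a, ⟨e', he', rfl⟩, b, ⟨g, hg, rfl⟩, rfl⟩
        exact ⟨g + e', ⟨g, hg, e', he', rfl⟩, by simp [monomial_mul, add_comm]⟩
      · rintro ⟨e, ⟨g, hg, e', he', rfl⟩, rfl⟩
        exact ⟨_, ⟨e', he', rfl⟩, _, ⟨g, hg, rfl⟩, by simp [monomial_mul, add_comm]⟩

/-- Superset of the exponent vectors of the generators of `inP` (case ε = 0, qz = 0). -/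
def Eset (n p q v w : ℕ) [NeZero n] : Set (Fin n →₀ ℕ) :=
  {e | ∃ a : ℕ, a ≤ p ∧
      (e = Finsupp.single ((a-1 : ℕ) : Fin n) 1 + Finsupp.single ((p-1 : ℕ) : Fin n) q ∨
       e = Finsupp.single ((a-1 : ℕ) : Fin n) 1 + Finsupp.single ((p-1 : ℕ) : Fin n) q
             + Finsupp.single ((n-1 : ℕ) : Fin n) (v-w))} ∪
  {Finsupp.single ((n-1 : ℕ) : Fin n) v} ∪
  {e | ∃ a b : ℕ, 1 ≤ a ∧ a ≤ b ∧ b ≤ p-1 ∧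
      e = Finsupp.single ((a-1 : ℕ) : Fin n) 1 + Finsupp.single ((b-1 : ℕ) : Fin n) 1}

lemma mon2 {K : Type*} [Field K] {σ : Type*} (a b : σ) (c e : ℕ) :
    (MvPolynomial.monomial (Finsupp.single a c + Finsupp.single b e) (1:K))
      = X a ^ c * X b ^ e := by
  rw [X_pow_eq_monomial, X_pow_eq_monomial, monomial_mul, one_mul]

lemma mon3 {K : Type*} [Field K] {σ : Type*} (a b c' : σ) (c e f : ℕ) :
    (MvPolynomial.monomial (Finsupp.single a c + Finsupp.single b e + Finsupp.single c' f) (1:K))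
      = X a ^ c * X b ^ e * X c' ^ f := by
  rw [X_pow_eq_monomial, X_pow_eq_monomial, X_pow_eq_monomial, monomial_mul, monomial_mul,
    one_mul, one_mul]

lemma gens_sub {K : Type*} [Field K] {n p q r v w rz : ℕ} [NeZero n] :
    inPgens K n p q r v w rz 0 0 ⊆ (fun s => MvPolynomial.monomial s (1:K)) '' Eset n p q v w := by
  rintro f (((⟨a, har, hap, rfl⟩ | ⟨j, hj1, hjp, hqq, rfl⟩) | hf3) | ⟨a, b, ha1, hab, hbp, rfl⟩)
  · exact ⟨_, Or.inl (Or.inl ⟨a, hap, Or.inl rfl⟩),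
      by beta_reduce; rw [mon2]; simp [xv]⟩
  · refine ⟨_, Or.inl (Or.inl ⟨j, hjp, Or.inr rfl⟩), ?_⟩
    beta_reduce
    rw [mon3]
    simp [xv]
  · refine ⟨_, Or.inl (Or.inr rfl), ?_⟩
    rw [Set.mem_singleton_iff] at hf3
    rw [hf3]
    beta_reduce
    simp [xv, X_pow_eq_monomial]
  · exact ⟨_, Or.inr ⟨a, b, ha1, hab, hbp, rfl⟩,
      by beta_reduce; rw [mon2]; simp [xv]⟩

lemma comb {n p q v w i : ℕ} [NeZero n] (hnp : n = p + 1) (hp2 : 2 ≤ p) (hq1 : 1 ≤ q)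
    (hv1 : 1 ≤ v) (hi0 : 1 ≤ i) (hi2 : i ≤ p - 1) :
    ∀ (j : ℕ) (e : Fin n →₀ ℕ), e ∈ sumSet (Eset n p q v w) j →
      e ((p-1 : ℕ) : Fin n) ≤ q - 1 → e ((n-1 : ℕ) : Fin n) ≤ v - 1 →
      (∀ c : Fin n, c ≠ ((i-1 : ℕ) : Fin n) → c ≠ ((p-1 : ℕ) : Fin n) →
        c ≠ ((n-1 : ℕ) : Fin n) → e c = 0) →
      2 * j ≤ e ((i-1 : ℕ) : Fin n) := by
  intro j
  induction j with
  | zero => intro e _ _ _ _; omega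
  | succ j ih =>
    rintro e ⟨g, hg, e', he', rfl⟩ hP hN h0
    rcases hg with ((⟨a, hap, (rfl | rfl)⟩ | hg3) | ⟨a, b, ha1, hab, hbp, rfl⟩)
    · -- g = single (a-1) 1 + single (p-1) q : impossible since e (p-1) ≤ q-1
      exfalso
      rw [Finsupp.add_apply, Finsupp.add_apply, Finsupp.single_eq_same] at hP
      omega
    · exfalso
      rw [Finsupp.add_apply, Finsupp.add_apply, Finsupp.add_apply,
        Finsupp.single_eq_same] at hP
      omega
    · -- g = single (n-1) v : impossible since e (n-1) ≤ v-1
      exfalso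
      rw [Set.mem_singleton_iff] at hg3
      subst hg3
      rw [Finsupp.add_apply, Finsupp.single_eq_same] at hN
      omega
    · -- g = single (a-1) 1 + single (b-1) 1 with 1 ≤ a ≤ b ≤ p-1
      have hA : ((a-1 : ℕ) : Fin n) = ((i-1 : ℕ) : Fin n) := by
        by_contra hA
        have hAP : ((a-1 : ℕ) : Fin n) ≠ ((p-1 : ℕ) : Fin n) := by
          intro h
          have h' := congrArg Fin.val h
          rw [Fin.val_cast_of_lt (by omega), Fin.val_cast_of_lt (by omega)] at h'
          omega
        have hAN : ((a-1 : ℕ) : Fin n) ≠ ((n-1 : ℕ) : Fin n) := by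
          intro h
          have h' := congrArg Fin.val h
          rw [Fin.val_cast_of_lt (by omega), Fin.val_cast_of_lt (by omega)] at h'
          omega
        have h1 := h0 _ hA hAP hAN
        rw [Finsupp.add_apply, Finsupp.add_apply, Finsupp.single_eq_same] at h1
        omega
      have hB : ((b-1 : ℕ) : Fin n) = ((i-1 : ℕ) : Fin n) := by
        by_contra hB
        have hBP : ((b-1 : ℕ) : Fin n) ≠ ((p-1 : ℕ) : Fin n) := by
          intro h
          have h' := congrArg Fin.val h
          rw [Fin.val_cast_of_lt (by omega), Fin.val_cast_of_lt (by omega)] at h'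
          omega
        have hBN : ((b-1 : ℕ) : Fin n) ≠ ((n-1 : ℕ) : Fin n) := by
          intro h
          have h' := congrArg Fin.val h
          rw [Fin.val_cast_of_lt (by omega), Fin.val_cast_of_lt (by omega)] at h'
          omega
        have h1 := h0 _ hB hBP hBN
        rw [Finsupp.add_apply, Finsupp.add_apply] at h1
        rw [Finsupp.single_eq_same] at h1
        omega
      rw [hA, hB]
      -- note: goal now `2*(j+1) ≤ ((single I 1 + single I 1) + e') I` after pointwise eval
      have hIP : ((i-1 : ℕ) : Fin n) ≠ ((p-1 : ℕ) : Fin n) := by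
        intro h
        have h' := congrArg Fin.val h
        rw [Fin.val_cast_of_lt (by omega), Fin.val_cast_of_lt (by omega)] at h'
        omega
      have hIN : ((i-1 : ℕ) : Fin n) ≠ ((n-1 : ℕ) : Fin n) := by
        intro h
        have h' := congrArg Fin.val h
        rw [Fin.val_cast_of_lt (by omega), Fin.val_cast_of_lt (by omega)] at h'
        omega
      have hP' : e' ((p-1 : ℕ) : Fin n) ≤ q - 1 := by
        rw [Finsupp.add_apply] at hP; omega
      have hN' : e' ((n-1 : ℕ) : Fin n) ≤ v - 1 := by
        rw [Finsupp.add_apply] at hN; omega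
      have h0' : ∀ c : Fin n, c ≠ ((i-1 : ℕ) : Fin n) → c ≠ ((p-1 : ℕ) : Fin n) →
          c ≠ ((n-1 : ℕ) : Fin n) → e' c = 0 := by
        intro c h1 h2 h3
        have := h0 c h1 h2 h3
        rw [Finsupp.add_apply] at this
        omega
      have hih := ih e' he' hP' hN' h0'
      simp only [Finsupp.add_apply, Finsupp.single_eq_same]
      omega

/-- assume `ε = 0`, `qz = 0` and `q ≥ 1`. Then for every `i` with
`r − rz ≤ i ≤ p−1`, the monomial `x_i x_p^{q−1} x_n^{v−1}` is not in the Ratliff-Rush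
closure of `inP`; in particular there is no `m ≥ 1` with
`x_i x_p^{q−1} x_n^{v−1} (x_i^2)^m ∈ (inP)^{m+1}`. -/
theorem stmt16 {K : Type*} [Field K]
    (n p : ℕ) [NeZero n] (hn : 2 ≤ n) (hp : p = n - 1)
    (m : ℕ → ℕ) (hm0 : 0 < m 0) (hmn : 0 < m n)
    (harith : ∃ d : ℕ, 0 < d ∧ ∀ i < p, m (i + 1) = m i + d)
    (hgcd : ∀ c : ℕ, (∀ i ≤ p, c ∣ m i) → c ∣ m n → c = 1)
    (Γ Γ' : AddSubmonoid ℤ)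
    (hΓ : Γ = AddSubmonoid.closure ((fun i => (m i : ℤ)) '' (Set.Iic p ∪ {n})))
    (hΓ' : Γ' = AddSubmonoid.closure ((fun i => (m i : ℤ)) '' Set.Iic p))
    (hmin : ∀ j ∈ (Set.Iic p ∪ {n} : Set ℕ),
      (m j : ℤ) ∉ AddSubmonoid.closure ((fun i => (m i : ℤ)) '' ((Set.Iic p ∪ {n}) \ {j})))
    (qf : ℕ → ℤ) (rf : ℕ → ℕ)
    (hqr : ∀ t : ℕ, 1 ≤ rf t ∧ rf t ≤ p ∧ (t : ℤ) = qf t * p + rf t)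
    (g : ℕ → ℤ) (hg : ∀ t, g t = qf t * m p + m (rf t))
    (S : Set ℤ) (hS : S = {γ : ℤ | γ ∈ Γ ∧ γ - m 0 ∉ Γ})
    (u : ℕ) (hu : g u ∉ S ∧ ∀ t < u, g t ∈ S)
    (v : ℕ) (hv1 : 1 ≤ v) (hv2 : (v : ℤ) * m n ∈ Γ')
    (hv3 : ∀ b : ℕ, 1 ≤ b → b < v → (b : ℤ) * m n ∉ Γ')
    (w z L mu : ℕ) (hw : w ≤ v - 1) (hz : z ≤ u - 1) (hL : 1 ≤ L)
    (hgu : g u = (L : ℤ) * m 0 + (w : ℤ) * m n)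
    (hvmn : (v : ℤ) * m n = (mu : ℤ) * m 0 + g z)
    (q r : ℕ) (hq : (q : ℤ) = qf u) (hr : r = rf u)
    (ε : ℕ) (hε : ε = if rf z < r then 0 else 1)
    (inP : Ideal (MvPolynomial (Fin n) K))
    (hinP : inP = Ideal.span (inPgens K n p q r v w (rf z) ε (qf z)))
    (hε0 : ε = 0) (hqz0 : qf z = 0) (hq1 : 1 ≤ q) :
    ∀ i : ℕ, r ≤ i + rf z → i ≤ p - 1 →
      xv K n i * xv K n p ^ (q - 1) * xv K n n ^ (v - 1) ∉ rrSet inP ∧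
      ∀ k : ℕ, 1 ≤ k →
        xv K n i * xv K n p ^ (q - 1) * xv K n n ^ (v - 1) * (xv K n i ^ 2) ^ k ∉
          inP ^ (k + 1) := by
  subst hε0
  rw [hqz0] at hinP
  intro i hi1 hi2
  have hrzr : rf z < r := by
    by_contra hcon
    rw [if_neg hcon] at hε
    omega
  have hrz1 : 1 ≤ rf z := (hqr z).1
  have hi0 : 1 ≤ i := by omega
  have hp2 : 2 ≤ p := by omega
  have hnp : n = p + 1 := by omega
  have hIP : ((i-1 : ℕ) : Fin n) ≠ ((p-1 : ℕ) : Fin n) := by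
    intro h
    have h' := congrArg Fin.val h
    rw [Fin.val_cast_of_lt (by omega), Fin.val_cast_of_lt (by omega)] at h'
    omega
  have hIN : ((i-1 : ℕ) : Fin n) ≠ ((n-1 : ℕ) : Fin n) := by
    intro h
    have h' := congrArg Fin.val h
    rw [Fin.val_cast_of_lt (by omega), Fin.val_cast_of_lt (by omega)] at h'
    omega
  have hPN : ((p-1 : ℕ) : Fin n) ≠ ((n-1 : ℕ) : Fin n) := by
    intro h
    have h' := congrArg Fin.val h
    rw [Fin.val_cast_of_lt (by omega), Fin.val_cast_of_lt (by omega)] at h'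
    omega
  have hkey : ∀ k : ℕ,
      xv K n i * xv K n p ^ (q - 1) * xv K n n ^ (v - 1) * (xv K n i ^ 2) ^ k ∉
        inP ^ (k + 1) := by
    intro k hmem
    set d : Fin n →₀ ℕ := Finsupp.single ((i-1 : ℕ) : Fin n) (2*k+1)
        + Finsupp.single ((p-1 : ℕ) : Fin n) (q-1)
        + Finsupp.single ((n-1 : ℕ) : Fin n) (v-1) with hd
    have hsp : inP ≤ Ideal.span ((fun s => MvPolynomial.monomial s (1:K)) '' Eset n p q v w) := by
      rw [hinP]
      exact Ideal.span_mono gens_sub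
    have hmem2 := (Ideal.pow_right_mono hsp (k+1)) hmem
    rw [span_monomial_pow] at hmem2
    have heq : xv K n i * xv K n p ^ (q - 1) * xv K n n ^ (v - 1) * (xv K n i ^ 2) ^ k
        = MvPolynomial.monomial d (1:K) := by
      have h1 : xv K n i * xv K n p ^ (q - 1) * xv K n n ^ (v - 1) * (xv K n i ^ 2) ^ k
          = MvPolynomial.X ((i-1 : ℕ) : Fin n) ^ (2*k+1)
            * MvPolynomial.X ((p-1 : ℕ) : Fin n) ^ (q-1)
            * MvPolynomial.X ((n-1 : ℕ) : Fin n) ^ (v-1) := by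
        simp only [xv]
        rw [← pow_mul]
        ring
      rw [h1, ← mon3, hd]
    rw [heq, MvPolynomial.mem_ideal_span_monomial_image] at hmem2
    obtain ⟨e, he, hle⟩ := hmem2 d (by
      classical
      rw [MvPolynomial.support_monomial, if_neg one_ne_zero]
      exact Finset.mem_singleton_self d)
    have hle' : ∀ c, e c ≤ d c := Finsupp.le_def.mp hle
    have hdI : d ((i-1 : ℕ) : Fin n) = 2*k+1 := by
      rw [hd]
      rw [Finsupp.add_apply, Finsupp.add_apply, Finsupp.single_eq_same,
        Finsupp.single_eq_of_ne hIP, Finsupp.single_eq_of_ne hIN]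
      omega
    have hdP : d ((p-1 : ℕ) : Fin n) = q-1 := by
      rw [hd]
      rw [Finsupp.add_apply, Finsupp.add_apply, Finsupp.single_eq_same,
        Finsupp.single_eq_of_ne (Ne.symm hIP), Finsupp.single_eq_of_ne hPN]
      omega
    have hdN : d ((n-1 : ℕ) : Fin n) = v-1 := by
      rw [hd]
      rw [Finsupp.add_apply, Finsupp.add_apply, Finsupp.single_eq_same,
        Finsupp.single_eq_of_ne (Ne.symm hIN), Finsupp.single_eq_of_ne (Ne.symm hPN)]
      omega
    have h0 : ∀ c : Fin n, c ≠ ((i-1 : ℕ) : Fin n) → c ≠ ((p-1 : ℕ) : Fin n) →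
        c ≠ ((n-1 : ℕ) : Fin n) → e c = 0 := by
      intro c h1 h2 h3
      have hdc : d c = 0 := by
        rw [hd, Finsupp.add_apply, Finsupp.add_apply,
          Finsupp.single_eq_of_ne h1, Finsupp.single_eq_of_ne h2,
          Finsupp.single_eq_of_ne h3]
        omega
      have := hle' c
      omega
    have hcomb := comb hnp hp2 hq1 hv1 hi0 hi2 (k+1) e he
      (by have := hle' ((p-1 : ℕ) : Fin n); omega)
      (by have := hle' ((n-1 : ℕ) : Fin n); omega)
      h0
    have := hle' ((i-1 : ℕ) : Fin n)
    omega
  refine ⟨?_, fun k _ => hkey k⟩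
  intro hmem
  obtain ⟨k, hk, hmem⟩ := Set.mem_iUnion₂.mp hmem
  have hx2 : xv K n i ^ 2 ∈ inP := by
    rw [pow_two, hinP]
    exact Ideal.subset_span (Or.inr ⟨i, i, hi0, le_rfl, hi2, rfl⟩)
  have hmul := Submodule.mem_colon.mp hmem _ (Ideal.pow_mem_pow hx2 k)
  rw [smul_eq_mul] at hmul
  exact hkey k hmul
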